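/- (Gradient of the stopping time by implicit differentiation.) Let f : ℝⁿ → ℝ be twice continuously differentiable, X : ℝ × ℝᵖ → ℝⁿ continuously differentiable, ε > 0, and T : ℝᵖ → ℝ differentiable with ‖∇f(X(T(θ), θ))‖² = ε² for all θ ∈ ℝᵖ. Fix θ and write X⋆ := X(T(θ), θ). If g(θ) := ⟨∇f(X⋆), ∇²f(X⋆) (∂X/∂t)(T(θ), θ)⟩ ≠ 0, then ∇T(θ) = −(1/g(θ)) · ((∂X/∂θ)(T(θ), θ))ᵀ ∇²f(X⋆) ∇f(X⋆). -/

import Mathlib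

open scoped RealInnerProductSpace

/-- Gradient of the stopping time by implicit differentiation. -/
theorem stmt_13 {n p : ℕ}
    (f : EuclideanSpace ℝ (Fin n) → ℝ) (hf : ContDiff ℝ 2 f)
    (X : ℝ → EuclideanSpace ℝ (Fin p) → EuclideanSpace ℝ (Fin n))
    (hX : ContDiff ℝ 1 (fun q : ℝ × EuclideanSpace ℝ (Fin p) => X q.1 q.2))
    (ε : ℝ) (hε : 0 < ε)
    (T : EuclideanSpace ℝ (Fin p) → ℝ) (hT : Differentiable ℝ T)
    (hstop : ∀ θ' : EuclideanSpace ℝ (Fin p), ‖gradient f (X (T θ') θ')‖ ^ 2 = ε ^ 2)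
    (θ : EuclideanSpace ℝ (Fin p))
    (Xstar : EuclideanSpace ℝ (Fin n)) (hXstar : Xstar = X (T θ) θ)
    (g : ℝ)
    (hg : g = ⟪gradient f Xstar,
      (fderiv ℝ (gradient f) Xstar) (deriv (fun t => X t θ) (T θ))⟫)
    (hgne : g ≠ 0) :
    gradient T θ = (-(1 / g)) •
      (ContinuousLinearMap.adjoint (fderiv ℝ (fun θ' => X (T θ) θ') θ))
        ((fderiv ℝ (gradient f) Xstar) (gradient f Xstar)) := by
  subst hXstar
  set G : ℝ × EuclideanSpace ℝ (Fin p) → EuclideanSpace ℝ (Fin n) :=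
    fun q => X q.1 q.2 with hGdef
  -- a genuinely ℝ-linear version of the inverse of `toDual`
  set e : (EuclideanSpace ℝ (Fin n) →L[ℝ] ℝ) →L[ℝ] EuclideanSpace ℝ (Fin n) :=
    { toFun := fun L => (InnerProductSpace.toDual ℝ (EuclideanSpace ℝ (Fin n))).symm L
      map_add' := fun a b => by simp
      map_smul' := fun r a => by simp
      cont := (InnerProductSpace.toDual ℝ (EuclideanSpace ℝ (Fin n))).symm.continuous } with he
  have he_apply : ∀ L : EuclideanSpace ℝ (Fin n) →L[ℝ] ℝ,
      e L = (InnerProductSpace.toDual ℝ (EuclideanSpace ℝ (Fin n))).symm L := fun L => rfl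
  have hge : gradient f = fun x => e (fderiv ℝ f x) := by
    funext x; rw [he_apply]; rfl
  have hf1 : ContDiff ℝ 1 (fderiv ℝ f) := hf.fderiv_right (by norm_num)
  have hgradC : ContDiff ℝ 1 (gradient f) := by
    rw [hge]; exact e.contDiff.comp hf1
  -- derivative data
  have hTθ : HasFDerivAt T (fderiv ℝ T θ) θ := (hT θ).hasFDerivAt
  set dT := fderiv ℝ T θ with hdT
  have hP : HasFDerivAt (fun θ' : EuclideanSpace ℝ (Fin p) => (T θ', θ'))
      (dT.prod (ContinuousLinearMap.id ℝ (EuclideanSpace ℝ (Fin p)))) θ :=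
    hTθ.prodMk (hasFDerivAt_id θ)
  have hGd : HasFDerivAt G (fderiv ℝ G (T θ, θ)) (T θ, θ) :=
    ((hX.differentiable one_ne_zero) _).hasFDerivAt
  set G' := fderiv ℝ G (T θ, θ) with hG'
  set Xs := X (T θ) θ with hXs
  have hu : HasFDerivAt (fun θ' : EuclideanSpace ℝ (Fin p) => X (T θ') θ')
      (G'.comp (dT.prod (ContinuousLinearMap.id ℝ (EuclideanSpace ℝ (Fin p))))) θ := by
    have h := HasFDerivAt.comp (f := fun θ' : EuclideanSpace ℝ (Fin p) => (T θ', θ')) θ hGd hP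
    exact h
  set Du := G'.comp (dT.prod (ContinuousLinearMap.id ℝ (EuclideanSpace ℝ (Fin p)))) with hDu
  set H := fderiv ℝ (gradient f) Xs with hH
  have hgradd : HasFDerivAt (gradient f) H Xs :=
    ((hgradC.differentiable one_ne_zero) _).hasFDerivAt
  have hφ : HasFDerivAt (fun θ' : EuclideanSpace ℝ (Fin p) => gradient f (X (T θ') θ'))
      (H.comp Du) θ := by
    have h := HasFDerivAt.comp (f := fun θ' : EuclideanSpace ℝ (Fin p) => X (T θ') θ') θ hgradd hu
    exact h
  -- the stopping condition gives a vanishing derivative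
  have hF := hφ.inner (𝕜 := ℝ) hφ
  have hFc : (fun θ' : EuclideanSpace ℝ (Fin p) =>
      ⟪gradient f (X (T θ') θ'), gradient f (X (T θ') θ')⟫) = fun _ => ε ^ 2 := by
    funext θ'; rw [real_inner_self_eq_norm_sq]; exact hstop θ'
  rw [hFc] at hF
  have hzero := hF.unique (hasFDerivAt_const (ε ^ 2) θ)
  have key : ∀ v : EuclideanSpace ℝ (Fin p), ⟪gradient f Xs, H (Du v)⟫ = 0 := by
    intro v
    have h := congrArg (fun L : EuclideanSpace ℝ (Fin p) →L[ℝ] ℝ => L v) hzero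
    simp only [ContinuousLinearMap.comp_apply, ContinuousLinearMap.prod_apply,
      fderivInnerCLM_apply, ContinuousLinearMap.zero_apply] at h
    have hcomm := real_inner_comm (gradient f Xs) (H (Du v))
    linarith
  -- partial derivatives
  have hw : HasDerivAt (fun t => X t θ) (G' (1, 0)) (T θ) := by
    have hQ : HasFDerivAt (fun t : ℝ => (t, θ))
        ((ContinuousLinearMap.id ℝ ℝ).prod (0 : ℝ →L[ℝ] EuclideanSpace ℝ (Fin p))) (T θ) :=
      (hasFDerivAt_id _).prodMk (hasFDerivAt_const _ _)
    have h2 := (HasFDerivAt.comp (f := fun t : ℝ => (t, θ)) (T θ) hGd hQ).hasDerivAt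
    exact h2
  have hwderiv : deriv (fun t => X t θ) (T θ) = G' (1, 0) := hw.deriv
  have hA : HasFDerivAt (fun θ' : EuclideanSpace ℝ (Fin p) => X (T θ) θ')
      (G'.comp ((0 : EuclideanSpace ℝ (Fin p) →L[ℝ] ℝ).prod
        (ContinuousLinearMap.id ℝ (EuclideanSpace ℝ (Fin p))))) θ := by
    have hQ : HasFDerivAt (fun θ' : EuclideanSpace ℝ (Fin p) => ((T θ : ℝ), θ'))
        ((0 : EuclideanSpace ℝ (Fin p) →L[ℝ] ℝ).prod
          (ContinuousLinearMap.id ℝ (EuclideanSpace ℝ (Fin p)))) θ :=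
      (hasFDerivAt_const _ _).prodMk (hasFDerivAt_id _)
    have h := HasFDerivAt.comp (f := fun θ' : EuclideanSpace ℝ (Fin p) => ((T θ : ℝ), θ')) θ hGd hQ
    exact h
  set A := G'.comp ((0 : EuclideanSpace ℝ (Fin p) →L[ℝ] ℝ).prod
    (ContinuousLinearMap.id ℝ (EuclideanSpace ℝ (Fin p)))) with hAdef
  have hAfd : fderiv ℝ (fun θ' : EuclideanSpace ℝ (Fin p) => X (T θ) θ') θ = A := hA.fderiv
  have hDusplit : ∀ v : EuclideanSpace ℝ (Fin p), Du v = dT v • G' (1, 0) + A v := by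
    intro v
    show G' (dT v, v) = dT v • G' (1, 0) + G' (0, v)
    have hv : (dT v, v) = dT v • ((1 : ℝ), (0 : EuclideanSpace ℝ (Fin p))) + ((0 : ℝ), v) := by
      simp [Prod.ext_iff]
    rw [hv, map_add, map_smul]
  -- symmetry of the Hessian
  have hd2 : DifferentiableAt ℝ (fderiv ℝ f) Xs := (hf1.differentiable one_ne_zero) _
  have hHe : H = e.comp (fderiv ℝ (fderiv ℝ f) Xs) := by
    rw [hH, hge]
    exact (e.hasFDerivAt.comp Xs hd2.hasFDerivAt).fderiv
  have hsf : IsSymmSndFDerivAt ℝ f Xs := hf.contDiffAt.isSymmSndFDerivAt (by rw [minSmoothness_of_isRCLikeNormedField])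
  have hsymm : ∀ a b : EuclideanSpace ℝ (Fin n), ⟪H a, b⟫ = ⟪H b, a⟫ := by
    intro a b
    have h1 : ∀ c d : EuclideanSpace ℝ (Fin n), ⟪H c, d⟫ = fderiv ℝ (fderiv ℝ f) Xs c d := by
      intro c d
      rw [hHe, ContinuousLinearMap.comp_apply, he_apply,
        InnerProductSpace.toDual_symm_apply]
    rw [h1, h1, hsf.eq a b]
  -- conclude
  rw [hAfd]
  apply ext_inner_right ℝ
  intro v
  have hgT : ⟪gradient T θ, v⟫ = dT v := by
    rw [hdT]
    simp [gradient, InnerProductSpace.toDual_symm_apply]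
  have h1 := key v
  rw [hDusplit v, map_add, map_smul, inner_add_right, inner_smul_right] at h1
  have hg' : g = ⟪gradient f Xs, H (G' (1, 0))⟫ := by rw [hg, hwderiv]
  have h2 : ⟪gradient f Xs, H (A v)⟫
      = ⟪(ContinuousLinearMap.adjoint A) (H (gradient f Xs)), v⟫ := by
    rw [ContinuousLinearMap.adjoint_inner_left]
    rw [real_inner_comm, hsymm (A v) (gradient f Xs)]
  rw [h2, ← hg'] at h1
  rw [hgT, real_inner_smul_left]
  have h3 : ⟪(ContinuousLinearMap.adjoint A) (H (gradient f Xs)), v⟫ = -(g * dT v) := by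
    linarith
  rw [h3]
  field_simp
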